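/- Let V : K → H be a linear isometry between separable Hilbert spaces (V*V = I on K) and T_x : H → H a positive bounded self-adjoint operator. For λ > 0 and any sequence of positive step-sizes η_1,...,η_t with η_k ‖T_x‖ ≤ 1, define G_t = ∑_{k=1}^{t} η_k ∏_{i=k+1}^{t}(I_K - η_i V* T_x V). Then ‖(T_x + λ I)^{1/2} V G_t V* (T_x + λ I)^{1/2}‖ ≤ 1 + λ ∑_{k=1}^{t} η_k. -/

import Mathlib

open Finset ContinuousLinearMap

/-- The ordered product Π_{i=a}^{b} f i of operators (identity if a > b). -/
noncomputable def opProd {K : Type*} [NormedAddCommGroup K] [InnerProductSpace ℂ K]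
    [CompleteSpace K] (f : ℕ → (K →L[ℂ] K)) (a b : ℕ) : K →L[ℂ] K :=
  ((List.range (b + 1 - a)).map fun j => f (a + j)).prod

lemma telescope_aux (η : ℕ → ℝ) (x : ℝ) :
    ∀ t : ℕ, x * ∑ k ∈ Finset.Icc 1 t, η k * ∏ i ∈ Finset.Icc (k+1) t, (1 - η i * x)
      = 1 - ∏ i ∈ Finset.Icc 1 t, (1 - η i * x) := by
  intro t
  induction t with
  | zero => simp
  | succ t ih =>
    rw [Finset.sum_Icc_succ_top (by omega : 1 ≤ t + 1),
      Finset.prod_Icc_succ_top (by omega : 1 ≤ t + 1),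
      Finset.sum_congr rfl (fun k hk => by
        rw [Finset.prod_Icc_succ_top (Nat.succ_le_succ (Finset.mem_Icc.mp hk).2), ← mul_assoc]),
      show Finset.Icc (t+1+1) (t+1) = ∅ from Finset.Icc_eq_empty (by omega),
      Finset.prod_empty, mul_one, ← Finset.sum_mul]
    linear_combination (1 - η (t+1) * x) * ih

lemma opProd_eq_cfc {K : Type*} [NormedAddCommGroup K] [InnerProductSpace ℂ K]
    [CompleteSpace K] (A : K →L[ℂ] K) (hA : IsSelfAdjoint A) (η : ℕ → ℝ) (a b : ℕ) :
    opProd (fun i => 1 - η i • A) a b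
      = cfc (fun x : ℝ => ∏ i ∈ Finset.Icc a b, (1 - η i * x)) A := by
  have hfun : (fun x : ℝ => ∏ i ∈ Finset.Icc a b, (1 - η i * x))
      = fun x => ∏ j ∈ Finset.range (b + 1 - a), (1 - η (a + j) * x) := by
    funext x
    rw [← Finset.Ico_add_one_right_eq_Icc, Finset.prod_Ico_eq_prod_range]
  rw [hfun]
  unfold opProd
  generalize b + 1 - a = n
  induction n with
  | zero => simpa using (cfc_const_one ℝ A hA).symm
  | succ n ih =>
    rw [List.range_succ, List.map_append, List.prod_append]
    simp only [List.map_cons, List.map_nil, List.prod_cons, List.prod_nil, mul_one]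
    rw [ih]
    have hcont : ∀ m, ContinuousOn (fun x : ℝ => ∏ j ∈ Finset.range m, (1 - η (a + j) * x))
        (spectrum ℝ A) := fun m =>
      (continuous_finset_prod _ (fun i _ => by fun_prop)).continuousOn
    have h1 : (1 : K →L[ℂ] K) - η (a + n) • A
        = cfc (fun x : ℝ => 1 - η (a + n) * x) A := by
      rw [cfc_sub (fun _ : ℝ => (1:ℝ)) (fun x : ℝ => η (a + n) * x) A
        continuousOn_const (by fun_prop)]
      rw [cfc_const_one ℝ A hA, cfc_const_mul_id (η (a+n)) A hA]
    rw [h1, ← cfc_mul _ _ A (hcont n) (by fun_prop)]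
    apply cfc_congr
    intro x _
    simp only [Finset.prod_range_succ]


set_option maxHeartbeats 1000000 in
/-- Let V : K → H be a linear isometry (V*V = I) between separable Hilbert spaces,
    T_x positive self-adjoint on H, λ > 0, and 0 < η_k with η_k‖T_x‖ ≤ 1.  With
    G_t = ∑_{k=1}^t η_k Π_{i=k+1}^t (I - η_i V* T_x V) and R the positive square root
    of T_x + λ I, one has ‖(T_x+λI)^{1/2} V G_t V* (T_x+λI)^{1/2}‖ ≤ 1 + λ ∑_{k=1}^t η_k. -/
theorem sandwiched_gradient_sum_bound
    {H K : Type*} [NormedAddCommGroup H] [InnerProductSpace ℂ H] [CompleteSpace H]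
    [TopologicalSpace.SeparableSpace H]
    [NormedAddCommGroup K] [InnerProductSpace ℂ K] [CompleteSpace K]
    [TopologicalSpace.SeparableSpace K]
    (V : K →L[ℂ] H) (hV : ContinuousLinearMap.adjoint V ∘L V = 1)
    (Tx : H →L[ℂ] H) (hTxsa : IsSelfAdjoint Tx) (hTxpos : Tx.IsPositive)
    (lam : ℝ) (hlam : 0 < lam)
    (η : ℕ → ℝ) (hηpos : ∀ k, 0 < η k) (hηT : ∀ k, η k * ‖Tx‖ ≤ 1)
    (R : H →L[ℂ] H) (hRsa : IsSelfAdjoint R) (hRpos : R.IsPositive)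
    (hRsq : R * R = Tx + (lam : ℂ) • 1)
    (t : ℕ) :
    ‖R ∘L V ∘L
        (∑ k ∈ Finset.Icc 1 t, η k •
          opProd (fun i => 1 - η i • (ContinuousLinearMap.adjoint V ∘L Tx ∘L V)) (k + 1) t)
        ∘L ContinuousLinearMap.adjoint V ∘L R‖ ≤
      1 + lam * ∑ k ∈ Finset.Icc 1 t, η k := by
  have hsum0 : 0 ≤ ∑ k ∈ Finset.Icc 1 t, η k := Finset.sum_nonneg fun k _ => (hηpos k).le
  rcases subsingleton_or_nontrivial K with hK | hK
  · haveI : Subsingleton (K →L[ℂ] K) := ⟨fun f g => by ext x; exact Subsingleton.elim _ _⟩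
    rw [Subsingleton.elim (∑ k ∈ Finset.Icc 1 t, η k •
          opProd (fun i => 1 - η i • (ContinuousLinearMap.adjoint V ∘L Tx ∘L V)) (k + 1) t)
        (0 : K →L[ℂ] K)]
    simp only [ContinuousLinearMap.zero_comp, ContinuousLinearMap.comp_zero, norm_zero]
    nlinarith
  · set A : K →L[ℂ] K := ContinuousLinearMap.adjoint V ∘L Tx ∘L V with hAdef
    have hApos : A.IsPositive := hTxpos.adjoint_conj V
    have hAsa : IsSelfAdjoint A := hApos.isSelfAdjoint
    have hA0 : (0 : K →L[ℂ] K) ≤ A := (ContinuousLinearMap.nonneg_iff_isPositive A).mpr hApos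
    have hVnorm : ‖V‖ ≤ 1 := by
      have h1 : ‖ContinuousLinearMap.adjoint V ∘L V‖ = ‖V‖ * ‖V‖ := norm_adjoint_comp_self V
      rw [hV, norm_one] at h1
      nlinarith [norm_nonneg V]
    have hadjnorm : ‖ContinuousLinearMap.adjoint V‖ = ‖V‖ :=
      ContinuousLinearMap.adjoint.norm_map V
    have hAnorm : ‖A‖ ≤ ‖Tx‖ := by
      calc ‖A‖ ≤ ‖ContinuousLinearMap.adjoint V‖ * ‖Tx ∘L V‖ := opNorm_comp_le _ _
        _ ≤ ‖ContinuousLinearMap.adjoint V‖ * (‖Tx‖ * ‖V‖) := by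
            gcongr
            exact opNorm_comp_le _ _
        _ = ‖V‖ * (‖Tx‖ * ‖V‖) := by rw [hadjnorm]
        _ ≤ 1 * (‖Tx‖ * 1) := by gcongr
        _ = ‖Tx‖ := by ring
    have hsp : ∀ x ∈ spectrum ℝ A, 0 ≤ x ∧ x ≤ ‖Tx‖ := by
      intro x hx
      refine ⟨spectrum_nonneg_of_nonneg hA0 hx, ?_⟩
      have h1 := spectrum.norm_le_norm_of_mem hx
      rw [Real.norm_eq_abs] at h1
      exact (le_abs_self x).trans (h1.trans hAnorm)
    have hfac : ∀ x ∈ spectrum ℝ A, ∀ i, 0 ≤ 1 - η i * x ∧ 1 - η i * x ≤ 1 := by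
      intro x hx i
      obtain ⟨h0, h1⟩ := hsp x hx
      constructor
      · have h2 : η i * x ≤ η i * ‖Tx‖ := mul_le_mul_of_nonneg_left h1 (hηpos i).le
        linarith [hηT i]
      · nlinarith [hηpos i]
    have hqcont : ∀ k, Continuous (fun x : ℝ => ∏ i ∈ Finset.Icc (k+1) t, (1 - η i * x)) :=
      fun k => continuous_finset_prod _ fun i _ => by fun_prop
    have hgcont : Continuous (fun x : ℝ =>
        ∑ k ∈ Finset.Icc 1 t, η k * ∏ i ∈ Finset.Icc (k+1) t, (1 - η i * x)) :=
      continuous_finset_sum _ fun k _ => continuous_const.mul (hqcont k)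
    have hq01 : ∀ x ∈ spectrum ℝ A, ∀ k,
        0 ≤ (∏ i ∈ Finset.Icc (k+1) t, (1 - η i * x)) ∧
          (∏ i ∈ Finset.Icc (k+1) t, (1 - η i * x)) ≤ 1 := fun x hx k =>
      ⟨Finset.prod_nonneg fun i _ => (hfac x hx i).1,
       Finset.prod_le_one (fun i _ => (hfac x hx i).1) (fun i _ => (hfac x hx i).2)⟩
    have hg0 : ∀ x ∈ spectrum ℝ A,
        0 ≤ ∑ k ∈ Finset.Icc 1 t, η k * ∏ i ∈ Finset.Icc (k+1) t, (1 - η i * x) :=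
      fun x hx => Finset.sum_nonneg fun k _ => mul_nonneg (hηpos k).le (hq01 x hx k).1
    have hgle : ∀ x ∈ spectrum ℝ A,
        (∑ k ∈ Finset.Icc 1 t, η k * ∏ i ∈ Finset.Icc (k+1) t, (1 - η i * x))
          ≤ ∑ k ∈ Finset.Icc 1 t, η k :=
      fun x hx => Finset.sum_le_sum fun k _ =>
        mul_le_of_le_one_right (hηpos k).le (hq01 x hx k).2
    have hxg : ∀ x ∈ spectrum ℝ A,
        x * ∑ k ∈ Finset.Icc 1 t, η k * ∏ i ∈ Finset.Icc (k+1) t, (1 - η i * x) ≤ 1 := by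
      intro x hx
      rw [telescope_aux η x t]
      have := Finset.prod_nonneg (fun i (_ : i ∈ Finset.Icc 1 t) => (hfac x hx i).1)
      linarith
    -- the operator sum equals cfc of g
    have hG : (∑ k ∈ Finset.Icc 1 t, η k • opProd (fun i => 1 - η i • A) (k + 1) t)
        = cfc (fun x : ℝ =>
            ∑ k ∈ Finset.Icc 1 t, η k * ∏ i ∈ Finset.Icc (k+1) t, (1 - η i * x)) A := by
      have step : ∀ k ∈ Finset.Icc 1 t, η k • opProd (fun i => 1 - η i • A) (k+1) t
          = cfc (fun x : ℝ => η k * ∏ i ∈ Finset.Icc (k+1) t, (1 - η i * x)) A := by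
        intro k _
        rw [opProd_eq_cfc A hAsa η (k+1) t]
        exact (cfc_smul (η k) _ A ((hqcont k).continuousOn)).symm
      rw [Finset.sum_congr rfl step,
        ← cfc_sum (fun k (x : ℝ) => η k * ∏ i ∈ Finset.Icc (k+1) t, (1 - η i * x)) A _
          (fun k _ => (continuous_const.mul (hqcont k)).continuousOn)]
      congr 1
      funext x
      simp [Finset.sum_apply]
    rw [hG]
    -- square root of g
    have hhcont : Continuous (fun x : ℝ => Real.sqrt
        (∑ k ∈ Finset.Icc 1 t, η k * ∏ i ∈ Finset.Icc (k+1) t, (1 - η i * x))) :=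
      Real.continuous_sqrt.comp hgcont
    set S : K →L[ℂ] K := cfc (fun x : ℝ => Real.sqrt
        (∑ k ∈ Finset.Icc 1 t, η k * ∏ i ∈ Finset.Icc (k+1) t, (1 - η i * x))) A with hSdef
    have hSsa : IsSelfAdjoint S := cfc_predicate _ A
    have hSS : S * S = cfc (fun x : ℝ =>
        ∑ k ∈ Finset.Icc 1 t, η k * ∏ i ∈ Finset.Icc (k+1) t, (1 - η i * x)) A := by
      rw [hSdef, ← cfc_mul _ _ A hhcont.continuousOn hhcont.continuousOn]
      exact cfc_congr fun x hx => Real.mul_self_sqrt (hg0 x hx)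
    have hSSapp : ∀ y, S (S y) = cfc (fun x : ℝ =>
        ∑ k ∈ Finset.Icc 1 t, η k * ∏ i ∈ Finset.Icc (k+1) t, (1 - η i * x)) A y := fun y => by
      rw [← ContinuousLinearMap.mul_apply, hSS]
    set M : K →L[ℂ] H := R ∘L (V ∘L S) with hMdef
    have hMadj : ContinuousLinearMap.adjoint M
        = (S ∘L ContinuousLinearMap.adjoint V) ∘L R := by
      rw [hMdef, adjoint_comp, adjoint_comp, hRsa.adjoint_eq, hSsa.adjoint_eq]
    have htarget : R ∘L V ∘L (cfc (fun x : ℝ =>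
        ∑ k ∈ Finset.Icc 1 t, η k * ∏ i ∈ Finset.Icc (k+1) t, (1 - η i * x)) A)
          ∘L ContinuousLinearMap.adjoint V ∘L R
        = M ∘L ContinuousLinearMap.adjoint M := by
      ext y
      rw [hMadj]
      simp only [hMdef, hMadj, ContinuousLinearMap.comp_apply]
      rw [← hSSapp]
    rw [htarget]
    have e1 : ‖M ∘L ContinuousLinearMap.adjoint M‖
        = ‖ContinuousLinearMap.adjoint M ∘L M‖ := by
      have h1 := norm_adjoint_comp_self (ContinuousLinearMap.adjoint M)
      rw [adjoint_adjoint] at h1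
      rw [h1, norm_adjoint_comp_self M, ContinuousLinearMap.adjoint.norm_map M]
    rw [e1]
    have hRR : ∀ z, R (R z) = Tx z + (lam : ℂ) • z := fun z => by
      have h1 : (R * R) z = (Tx + (lam:ℂ) • (1 : H →L[ℂ] H)) z := by rw [hRsq]
      simpa using h1
    have hVV : ∀ w, ContinuousLinearMap.adjoint V (V w) = w := fun w => by
      have h1 : (ContinuousLinearMap.adjoint V ∘L V) w = (1 : K →L[ℂ] K) w := by rw [hV]
      simpa using h1
    have hmid : ContinuousLinearMap.adjoint M ∘L M
        = S * ((A + algebraMap ℝ (K →L[ℂ] K) lam) * S) := by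
      ext y
      rw [hMadj]
      simp only [hMadj, hMdef, ContinuousLinearMap.comp_apply, ContinuousLinearMap.mul_apply,
        ContinuousLinearMap.add_apply, Algebra.algebraMap_eq_smul_one,
        ContinuousLinearMap.smul_apply, ContinuousLinearMap.one_apply]
      rw [hRR, map_add, map_smul, hVV, Complex.coe_smul]
      rfl
    have hmid2 : S * ((A + algebraMap ℝ (K →L[ℂ] K) lam) * S)
        = cfc (fun x : ℝ => Real.sqrt
            (∑ k ∈ Finset.Icc 1 t, η k * ∏ i ∈ Finset.Icc (k+1) t, (1 - η i * x)) *
          ((x + lam) * Real.sqrt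
            (∑ k ∈ Finset.Icc 1 t, η k * ∏ i ∈ Finset.Icc (k+1) t, (1 - η i * x)))) A := by
      have h1 : A + algebraMap ℝ (K →L[ℂ] K) lam = cfc (fun x : ℝ => x + lam) A := by
        rw [cfc_add_const lam (fun x : ℝ => x) A continuousOn_id hAsa, cfc_id' ℝ A hAsa]
      have hc1 : Continuous fun x : ℝ => x + lam := by fun_prop
      rw [h1, ← cfc_mul _ _ A hc1.continuousOn hhcont.continuousOn,
        ← cfc_mul _ _ A hhcont.continuousOn (Continuous.continuousOn (by fun_prop : Continuous
          fun x : ℝ => (x + lam) * Real.sqrt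
            (∑ k ∈ Finset.Icc 1 t, η k * ∏ i ∈ Finset.Icc (k+1) t, (1 - η i * x))))]
    rw [hmid, hmid2]
    apply norm_cfc_le (by nlinarith)
    intro x hx
    have h0 := hg0 x hx
    have hle := hgle x hx
    have hxg1 := hxg x hx
    have hx0 := (hsp x hx).1
    have hh2 : Real.sqrt (∑ k ∈ Finset.Icc 1 t, η k * ∏ i ∈ Finset.Icc (k+1) t, (1 - η i * x)) *
        Real.sqrt (∑ k ∈ Finset.Icc 1 t, η k * ∏ i ∈ Finset.Icc (k+1) t, (1 - η i * x))
        = ∑ k ∈ Finset.Icc 1 t, η k * ∏ i ∈ Finset.Icc (k+1) t, (1 - η i * x) :=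
      Real.mul_self_sqrt h0
    have hval : Real.sqrt (∑ k ∈ Finset.Icc 1 t, η k * ∏ i ∈ Finset.Icc (k+1) t, (1 - η i * x)) *
        ((x + lam) * Real.sqrt
          (∑ k ∈ Finset.Icc 1 t, η k * ∏ i ∈ Finset.Icc (k+1) t, (1 - η i * x)))
        = (x + lam) * ∑ k ∈ Finset.Icc 1 t, η k * ∏ i ∈ Finset.Icc (k+1) t, (1 - η i * x) := by
      linear_combination (x + lam) * hh2
    rw [Real.norm_eq_abs, hval, abs_of_nonneg (mul_nonneg (by linarith) h0)]
    have h5 : lam * (∑ k ∈ Finset.Icc 1 t, η k * ∏ i ∈ Finset.Icc (k+1) t, (1 - η i * x))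
        ≤ lam * ∑ k ∈ Finset.Icc 1 t, η k := mul_le_mul_of_nonneg_left hle hlam.le
    have h6 : (x + lam) * (∑ k ∈ Finset.Icc 1 t, η k * ∏ i ∈ Finset.Icc (k+1) t, (1 - η i * x))
        = x * (∑ k ∈ Finset.Icc 1 t, η k * ∏ i ∈ Finset.Icc (k+1) t, (1 - η i * x))
          + lam * (∑ k ∈ Finset.Icc 1 t, η k * ∏ i ∈ Finset.Icc (k+1) t, (1 - η i * x)) := by
      ring
    linarith
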